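/- With the notation of the context, there exists a vector Z ∈ E with Ω(Z,·) = 0 and η(Z) = 1 if and only if φ_a = 0 for all a ∈ {m̄+1,…,n}. -/
import Mathlib


/-- A vector of the space `E` with basis `{Y₀, Y_α, P⁰, Pᵅ, V_a}`, where the index `α`
runs over `{1,…,n} = {1,…,m̄} ⊔ {m̄+1,…,n}` (modeled as `Fin mb ⊕ Fin k`) and the index
`a` runs over `{m̄+1,…,n}` (modeled as `Fin k`).  The fields are the coordinates with
respect to `Y₀`, the `Y_α`, `P⁰`, the `Pᵅ` and the `V_a` respectively. -/
structure EVec (mb k : ℕ) where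
  y0 : ℝ
  y : Fin mb ⊕ Fin k → ℝ
  p0 : ℝ
  p : Fin mb ⊕ Fin k → ℝ
  v : Fin k → ℝ

/-- With
`Ω = Yᵅ∧P_α + Γ_α Yᵅ∧Y⁰ + βᴬ P_A∧Y⁰ + βᵃ P_a∧Y⁰ + ½ s_{αβ} Yᵅ∧Yᵝ + φ_a Vᵃ∧Y⁰`
and `η = Y⁰`, there exists a vector `Z` with `Ω(Z,·) = 0` and `η(Z) = 1` if and only if
`φ_a = 0` for all `a`. -/
theorem stmt_7 (mb k : ℕ) (hn : 1 ≤ mb + k)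
    (Γ : Fin mb ⊕ Fin k → ℝ)
    (s : (Fin mb ⊕ Fin k) → (Fin mb ⊕ Fin k) → ℝ)
    (hs : ∀ α β, s α β = - s β α)
    (bb : Fin mb ⊕ Fin k → ℝ) (φ : Fin k → ℝ)
    (Ω : EVec mb k → EVec mb k → ℝ)
    (hΩ : ∀ u v, Ω u v =
      (∑ α, (u.y α * v.p α - v.y α * u.p α))
      + (∑ α, Γ α * (u.y α * v.y0 - v.y α * u.y0))
      + (∑ A, bb (Sum.inl A) * (u.p (Sum.inl A) * v.y0 - v.p (Sum.inl A) * u.y0))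
      + (∑ a, bb (Sum.inr a) * (u.p (Sum.inr a) * v.y0 - v.p (Sum.inr a) * u.y0))
      + (1 / 2) * (∑ α, ∑ β, s α β * (u.y α * v.y β - v.y α * u.y β))
      + (∑ a, φ a * (u.v a * v.y0 - v.v a * u.y0)))
    (η : EVec mb k → ℝ) (hη : ∀ u, η u = u.y0) :
    (∃ Z : EVec mb k, (∀ w, Ω Z w = 0) ∧ η Z = 1) ↔ (∀ a, φ a = 0) := by
  constructor
  · rintro ⟨Z, hZ, hZη⟩ a
    rw [hη] at hZη
    have h := hZ ⟨0, fun _ => 0, 0, fun _ => 0, fun b => if b = a then 1 else 0⟩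
    rw [hΩ] at h
    simp [hZη, Finset.sum_ite_eq'] at h
    linarith
  · intro hφ
    refine ⟨⟨1, bb, 0, fun α => -Γ α + ∑ β, s β α * bb β, 0⟩, fun w => ?_, by rw [hη]⟩
    rw [hΩ]
    simp only [hφ, zero_mul, Finset.sum_const_zero, add_zero]
    have h2 : ∑ α, ∑ β, s α β * w.y α * bb β = ∑ α, ∑ β, -(s α β * bb α * w.y β) := by
      rw [Finset.sum_comm]
      exact Finset.sum_congr rfl fun α _ => Finset.sum_congr rfl fun β _ => by
        rw [hs]; ring
    have hD : (∑ α, ∑ β, s α β * (bb α * w.y β - w.y α * bb β))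
        = 2 * ∑ α, (∑ β, s β α * bb β) * w.y α := by
      have e1 : (∑ α, ∑ β, s α β * (bb α * w.y β - w.y α * bb β))
          = (∑ α, ∑ β, s α β * bb α * w.y β) - (∑ α, ∑ β, s α β * w.y α * bb β) := by
        rw [← Finset.sum_sub_distrib]
        exact Finset.sum_congr rfl fun α _ => by
          rw [← Finset.sum_sub_distrib]
          exact Finset.sum_congr rfl fun β _ => by ring
      have e2 : (∑ α, (∑ β, s β α * bb β) * w.y α)
          = ∑ α, ∑ β, s α β * bb α * w.y β := by
        rw [Finset.sum_comm]
        exact Finset.sum_congr rfl fun α _ => by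
          rw [Finset.sum_mul]
      rw [e1, h2, e2]
      simp only [Finset.sum_neg_distrib]
      ring
    have hSbb : (∑ α, (∑ β, s β α * bb β) * bb α) = 0 := by
      have e3 : (∑ α, (∑ β, s β α * bb β) * bb α)
          = ∑ α, ∑ β, s β α * bb β * bb α := by
        exact Finset.sum_congr rfl fun α _ => by rw [Finset.sum_mul]
      have e4 : (∑ α, ∑ β, s β α * bb β * bb α)
          = -(∑ α, ∑ β, s β α * bb β * bb α) := by
        nth_rewrite 1 [Finset.sum_comm]
        rw [← Finset.sum_neg_distrib]
        refine Finset.sum_congr rfl fun α _ => ?_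
        rw [← Finset.sum_neg_distrib]
        exact Finset.sum_congr rfl fun β _ => by rw [hs]; ring
      rw [e3]
      linarith [e4]
    rw [hD]
    have e5 : (∑ A, bb (Sum.inl A) *
          ((-Γ (Sum.inl A) + ∑ β, s β (Sum.inl A) * bb β) * w.y0 - w.p (Sum.inl A) * 1))
        + (∑ a, bb (Sum.inr a) *
          ((-Γ (Sum.inr a) + ∑ β, s β (Sum.inr a) * bb β) * w.y0 - w.p (Sum.inr a) * 1))
        = ∑ α, bb α * ((-Γ α + ∑ β, s β α * bb β) * w.y0 - w.p α * 1) :=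
      (Fintype.sum_sum_type (fun α => bb α * ((-Γ α + ∑ β, s β α * bb β) * w.y0 - w.p α * 1))).symm
    calc (∑ α, (bb α * w.p α - w.y α * (-Γ α + ∑ β, s β α * bb β)))
          + (∑ α, Γ α * (bb α * w.y0 - w.y α * 1))
          + (∑ A, bb (Sum.inl A) * ((-Γ (Sum.inl A) + ∑ β, s β (Sum.inl A) * bb β) * w.y0 - w.p (Sum.inl A) * 1))
          + (∑ a, bb (Sum.inr a) * ((-Γ (Sum.inr a) + ∑ β, s β (Sum.inr a) * bb β) * w.y0 - w.p (Sum.inr a) * 1))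
          + 1 / 2 * (2 * ∑ α, (∑ β, s β α * bb β) * w.y α)
        = ∑ α, ((bb α * w.p α - w.y α * (-Γ α + ∑ β, s β α * bb β))
            + Γ α * (bb α * w.y0 - w.y α * 1)
            + bb α * ((-Γ α + ∑ β, s β α * bb β) * w.y0 - w.p α * 1)
            + (∑ β, s β α * bb β) * w.y α) := by
          simp only [Finset.sum_add_distrib]
          rw [← e5]
          ring
      _ = ∑ α, (∑ β, s β α * bb β) * bb α * w.y0 :=
          Finset.sum_congr rfl fun α _ => by ring
      _ = 0 := by rw [← Finset.sum_mul, hSbb, zero_mul]
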